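/- If X is a normal star-cdc Hausdorff space with a G_δ-diagonal of rank 2, then |X| ≤ 2^ℵ₀. -/

import Mathlib

open Cardinal Set

universe u

section Defs
variable (X : Type u) [TopologicalSpace X]

/-- An open cover of the whole space. -/
def IsOpenCover (𝒰 : Set (Set X)) : Prop := (∀ U ∈ 𝒰, IsOpen U) ∧ ⋃₀ 𝒰 = Set.univ

/-- The cellularity: supremum of cardinalities of pairwise disjoint families of nonempty
open sets, plus `ℵ₀`. -/
noncomputable def cellularity : Cardinal.{u} :=
  max ℵ₀ (⨆ 𝒰 : {𝒰 : Set (Set X) // (∀ U ∈ 𝒰, IsOpen U ∧ U.Nonempty) ∧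
    𝒰.PairwiseDisjoint id}, #𝒰.1)

/-- The weak Lindelöf degree. -/
noncomputable def wLdeg : Cardinal.{u} :=
  sInf {κ | ℵ₀ ≤ κ ∧ ∀ 𝒰 : Set (Set X), IsOpenCover X 𝒰 →
    ∃ 𝒱 ⊆ 𝒰, #𝒱 ≤ κ ∧ Dense (⋃₀ 𝒱)}

/-- The tightness. -/
noncomputable def tightness : Cardinal.{u} :=
  sInf {κ | ℵ₀ ≤ κ ∧ ∀ (A : Set X) (x : X), x ∈ closure A →
    ∃ B ⊆ A, #B ≤ κ ∧ x ∈ closure B}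

/-- The π-character. -/
noncomputable def piCharacter : Cardinal.{u} :=
  sInf {κ | ℵ₀ ≤ κ ∧ ∀ x : X, ∃ 𝒬 : Set (Set X), #𝒬 ≤ κ ∧
    (∀ P ∈ 𝒬, IsOpen P ∧ P.Nonempty) ∧
    ∀ U : Set X, IsOpen U → x ∈ U → ∃ P ∈ 𝒬, P ⊆ U}

/-- The pseudocharacter. -/
noncomputable def pseudoChar : Cardinal.{u} :=
  sInf {κ | ℵ₀ ≤ κ ∧ ∀ x : X, ∃ 𝒱 : Set (Set X), #𝒱 ≤ κ ∧
    (∀ V ∈ 𝒱, IsOpen V ∧ x ∈ V) ∧ ⋂₀ 𝒱 = {x}}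

/-- The closed pseudocharacter. -/
noncomputable def closedPseudoChar : Cardinal.{u} :=
  sInf {κ | ℵ₀ ≤ κ ∧ ∀ x : X, ∃ 𝒱 : Set (Set X), #𝒱 ≤ κ ∧
    (∀ V ∈ 𝒱, IsOpen V ∧ x ∈ V) ∧ (⋂ V ∈ 𝒱, closure V) = {x}}

/-- The density. -/
noncomputable def densityCard : Cardinal.{u} :=
  sInf {κ | ℵ₀ ≤ κ ∧ ∃ D : Set X, #D ≤ κ ∧ Dense D}

/-- The star of a set `A` with respect to a family `𝒰`. -/
def st (A : Set X) (𝒰 : Set (Set X)) : Set X := ⋃₀ {U | U ∈ 𝒰 ∧ (A ∩ U).Nonempty}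

/-- The θ-closure of a set. -/
def thetaClosure (A : Set X) : Set X :=
  {x | ∀ U : Set X, IsOpen U → x ∈ U → (closure U ∩ A).Nonempty}

/-- The θ-density. -/
noncomputable def thetaDensityCard : Cardinal.{u} :=
  sInf {κ | ℵ₀ ≤ κ ∧ ∃ D : Set X, #D ≤ κ ∧ thetaClosure X D = Set.univ}

/-- A discrete family of sets: each point has a neighborhood meeting at most one member. -/
def IsDiscreteFamily (𝒰 : Set (Set X)) : Prop :=
  ∀ x : X, ∃ V : Set X, IsOpen V ∧ x ∈ V ∧ {U | U ∈ 𝒰 ∧ (V ∩ U).Nonempty}.Subsingleton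

/-- Countable discrete cellularity. -/
def CDC : Prop :=
  ∀ 𝒰 : Set (Set X), (∀ U ∈ 𝒰, IsOpen U ∧ U.Nonempty) → IsDiscreteFamily X 𝒰 → 𝒰.Countable

/-- Star-cdc: every open cover has a cdc subspace whose star covers the space. -/
def StarCDC : Prop :=
  ∀ 𝒰 : Set (Set X), IsOpenCover X 𝒰 → ∃ Y : Set X, CDC ↥Y ∧ st X Y 𝒰 = Set.univ

/-- H-closed space: every open cover has a finite subfamily with dense union. -/
def IsHClosedSpace : Prop :=
  ∀ 𝒰 : Set (Set X), IsOpenCover X 𝒰 → ∃ 𝒱 ⊆ 𝒰, 𝒱.Finite ∧ Dense (⋃₀ 𝒱)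

/-- Countable cellularity (ccc). -/
def CCCSpace : Prop :=
  ∀ 𝒰 : Set (Set X), (∀ U ∈ 𝒰, IsOpen U ∧ U.Nonempty) → 𝒰.PairwiseDisjoint id → 𝒰.Countable

/-- Weakly Lindelöf space. -/
def WeaklyLindelof : Prop :=
  ∀ 𝒰 : Set (Set X), IsOpenCover X 𝒰 → ∃ 𝒱 ⊆ 𝒰, 𝒱.Countable ∧ Dense (⋃₀ 𝒱)

/-- Almost Lindelöf space. -/
def AlmostLindelof : Prop :=
  ∀ 𝒰 : Set (Set X), IsOpenCover X 𝒰 → ∃ 𝒱 ⊆ 𝒰, 𝒱.Countable ∧ (⋃ V ∈ 𝒱, closure V) = Set.univ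

/-- A π-base: a family of nonempty open sets such that every nonempty open set contains one. -/
def IsPiBase (ℬ : Set (Set X)) : Prop :=
  (∀ B ∈ ℬ, IsOpen B ∧ B.Nonempty) ∧
  ∀ U : Set X, IsOpen U → U.Nonempty → ∃ B ∈ ℬ, B ⊆ U

/-- Power homogeneous: some power of `X` is homogeneous. -/
def PowerHomogeneous : Prop :=
  ∃ ι : Type u, ∀ x y : ι → X, ∃ h : (ι → X) ≃ₜ (ι → X), h x = y

/-- A strong `G_δ`-diagonal of rank 2. -/
def HasStrongRank2Diagonal : Prop :=
  ∃ 𝒰 : ℕ → Set (Set X), (∀ n, IsOpenCover X (𝒰 n)) ∧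
    ∀ x : X, (⋂ n, closure (st X (st X {x} (𝒰 n)) (𝒰 n))) = {x}

/-- A `G_δ`-diagonal of rank 2. -/
def HasRank2Diagonal : Prop :=
  ∃ 𝒰 : ℕ → Set (Set X), (∀ n, IsOpenCover X (𝒰 n)) ∧
    ∀ x : X, (⋂ n, st X (st X {x} (𝒰 n)) (𝒰 n)) = {x}

/-- A `G_δ`-diagonal of rank 3. -/
def HasRank3Diagonal : Prop :=
  ∃ 𝒰 : ℕ → Set (Set X), (∀ n, IsOpenCover X (𝒰 n)) ∧
    ∀ x : X, (⋂ n, st X (st X (st X {x} (𝒰 n)) (𝒰 n)) (𝒰 n)) = {x}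

/-- Basically disconnected: the closure of every cozero set is open. -/
def BasicallyDisconnected : Prop :=
  ∀ f : C(X, ℝ), IsOpen (closure {x | f x ≠ 0})

end Defs

namespace Stmt9Aux

variable {α : Type u}

lemma aleph0_le_cont : (ℵ₀ : Cardinal.{u}) ≤ 2 ^ ℵ₀ := (Cardinal.cantor _).le

lemma cont_mul_cont : (2 ^ ℵ₀ : Cardinal.{u}) * 2 ^ ℵ₀ = 2 ^ ℵ₀ :=
  Cardinal.mul_eq_self aleph0_le_cont

lemma cont_pow_aleph0 : ((2 : Cardinal.{u}) ^ (ℵ₀ : Cardinal.{u})) ^ (ℵ₀ : Cardinal.{u}) = 2 ^ ℵ₀ := by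
  rw [← Cardinal.power_mul, Cardinal.aleph0_mul_aleph0]

/-- The index type: a well-order of type ω₁. -/
abbrev W : Type u := (Cardinal.aleph 1 : Cardinal.{u}).ord.ToType

lemma W_Iio_countable (w : W.{u}) : (Set.Iio w).Countable :=
  (Cardinal.countable_iff_lt_aleph_one _).mpr (Cardinal.mk_Iio_ord_toType w)

lemma W_Iic_countable (w : W.{u}) : (Set.Iic w).Countable := by
  have h : Set.Iic w = insert w (Set.Iio w) := by
    ext v; simp [le_iff_lt_or_eq, or_comm]
  rw [h]; exact (W_Iio_countable w).insert w

lemma W_not_countable : ¬(Set.univ : Set W.{u}).Countable := by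
  intro h
  have : Countable W.{u} := Set.countable_univ_iff.1 h
  have h1 : #(W.{u}) ≤ ℵ₀ := Cardinal.mk_le_aleph0
  rw [Cardinal.mk_toType, Cardinal.card_ord] at h1
  exact absurd (h1.trans_lt Cardinal.aleph0_lt_aleph_one) (lt_irrefl _)

lemma W_bounded {s : Set W.{u}} (hs : s.Countable) : ∃ w : W.{u}, ∀ v ∈ s, v < w := by
  by_contra h
  push_neg at h
  apply W_not_countable.{u}
  have hcover : (Set.univ : Set W.{u}) ⊆ ⋃ v ∈ s, Set.Iic v := by
    intro w _
    obtain ⟨v, hv, hle⟩ := h w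
    exact Set.mem_biUnion hv hle
  exact Set.Countable.mono hcover (hs.biUnion fun v _ => W_Iic_countable v)

lemma W_fiber (g : W.{u} → ℕ) : ∃ n, ¬(g ⁻¹' {n}).Countable := by
  by_contra h
  push_neg at h
  apply W_not_countable.{u}
  have hcover : (Set.univ : Set W.{u}) ⊆ ⋃ n : ℕ, g ⁻¹' {n} := fun w _ =>
    Set.mem_iUnion.2 ⟨g w, rfl⟩
  exact Set.Countable.mono hcover (Set.countable_iUnion h)

open Classical in
noncomputable def rho (c : α → α → ℕ) [Nonempty α] (D : Set α) (h : α → ℕ) : α :=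
  if hE : ∃ x, x ∉ D ∧ ∀ d ∈ D, c d x = h d then hE.choose else Classical.arbitrary α

lemma rho_spec {c : α → α → ℕ} [Nonempty α] {D : Set α} {h : α → ℕ}
    (hE : ∃ x, x ∉ D ∧ ∀ d ∈ D, c d x = h d) :
    rho c D h ∉ D ∧ ∀ d ∈ D, c d (rho c D h) = h d := by
  rw [rho, dif_pos hE]
  exact hE.choose_spec

noncomputable def step (c : α → α → ℕ) [Nonempty α] (B : Set α) : Set α :=
  B ∪ (fun p : Set α × (α → ℕ) => rho c p.1 p.2) ''
    {p | p.1 ⊆ B ∧ p.1.Countable ∧ ∀ x, x ∉ p.1 → p.2 x = 0}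

lemma subset_step (c : α → α → ℕ) [Nonempty α] (B : Set α) : B ⊆ step c B :=
  Set.subset_union_left

lemma rho_mem_step {c : α → α → ℕ} [Nonempty α] {B D : Set α} {h : α → ℕ}
    (hD : D ⊆ B) (hDc : D.Countable) (hz : ∀ x, x ∉ D → h x = 0) :
    rho c D h ∈ step c B :=
  Set.mem_union_right _ ⟨(D, h), ⟨hD, hDc, hz⟩, rfl⟩

/-- The graph of a pair `(D, h)` inside `↥B × ULift ℕ`. -/
def graphOf (B : Set α) (p : Set α × (α → ℕ)) : Set (↥B × ULift.{u} ℕ) :=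
  {q | (q.1 : α) ∈ p.1 ∧ p.2 q.1 = q.2.down}

lemma graphOf_countable {B : Set α} {p : Set α × (α → ℕ)} (hc : p.1.Countable) :
    (graphOf B p).Countable := by
  have hsub : graphOf B p ⊆
      (fun b : ↥B => (b, ULift.up (p.2 (b : α)))) '' (Subtype.val ⁻¹' p.1) := by
    rintro ⟨b, m⟩ ⟨h1, h2⟩
    refine ⟨b, h1, ?_⟩
    show (b, ULift.up (p.2 (b : α))) = (b, m)
    rw [h2, ULift.up_down]
  exact ((hc.preimage Subtype.coe_injective).image _).mono hsub

lemma graphOf_inj {B : Set α} {p p' : Set α × (α → ℕ)}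
    (hp : p ∈ {p : Set α × (α → ℕ) | p.1 ⊆ B ∧ p.1.Countable ∧ ∀ x, x ∉ p.1 → p.2 x = 0})
    (hp' : p' ∈ {p : Set α × (α → ℕ) | p.1 ⊆ B ∧ p.1.Countable ∧ ∀ x, x ∉ p.1 → p.2 x = 0})
    (heq : graphOf B p = graphOf B p') : p = p' := by
  obtain ⟨hB, _, hz⟩ := hp
  obtain ⟨hB', _, hz'⟩ := hp'
  have hD : p.1 = p'.1 := by
    ext x
    constructor
    · intro hx
      have : (⟨⟨x, hB hx⟩, ULift.up (p.2 x)⟩ : ↥B × ULift.{u} ℕ) ∈ graphOf B p := ⟨hx, rfl⟩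
      rw [heq] at this
      exact this.1
    · intro hx
      have : (⟨⟨x, hB' hx⟩, ULift.up (p'.2 x)⟩ : ↥B × ULift.{u} ℕ) ∈ graphOf B p' := ⟨hx, rfl⟩
      rw [← heq] at this
      exact this.1
  have hh : p.2 = p'.2 := by
    funext x
    by_cases hx : x ∈ p.1
    · have : (⟨⟨x, hB hx⟩, ULift.up (p.2 x)⟩ : ↥B × ULift.{u} ℕ) ∈ graphOf B p := ⟨hx, rfl⟩
      rw [heq] at this
      exact this.2.symm
    · rw [hz x hx, hz' x (hD ▸ hx)]
  exact Prod.ext hD hh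

lemma card_option_graph {B : Set α} (hB : #B ≤ 2 ^ ℵ₀) :
    #(ℕ → Option (↥B × ULift.{u} ℕ)) ≤ 2 ^ ℵ₀ := by
  have e : (ℕ → Option (↥B × ULift.{u} ℕ)) ≃ (ULift.{u} ℕ → Option (↥B × ULift.{u} ℕ)) :=
    Equiv.arrowCongr Equiv.ulift.symm (Equiv.refl _)
  rw [Cardinal.mk_congr e, ← Cardinal.power_def]
  have h1 : #(Option (↥B × ULift.{u} ℕ)) ≤ 2 ^ ℵ₀ := by
    rw [Cardinal.mk_option, Cardinal.mk_prod]
    simp only [Cardinal.lift_id, Cardinal.mk_uLift, Cardinal.mk_nat, Cardinal.lift_aleph0]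
    calc #B * ℵ₀ + 1 ≤ (2 ^ ℵ₀) * (2 ^ ℵ₀) + 2 ^ ℵ₀ := by
          gcongr
          · exact aleph0_le_cont
          · exact Cardinal.one_le_aleph0.trans aleph0_le_cont
      _ = 2 ^ ℵ₀ := by rw [cont_mul_cont, Cardinal.add_eq_self aleph0_le_cont]
  have h2 : #(ULift.{u} ℕ) = (ℵ₀ : Cardinal.{u}) := by simp
  rw [h2]
  calc #(Option (↥B × ULift.{u} ℕ)) ^ (ℵ₀ : Cardinal.{u}) ≤ (2 ^ ℵ₀) ^ (ℵ₀ : Cardinal.{u}) :=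
        Cardinal.power_le_power_right h1
    _ = 2 ^ ℵ₀ := cont_pow_aleph0

lemma card_pairs {B : Set α} (hB : #B ≤ 2 ^ ℵ₀) :
    #({p : Set α × (α → ℕ) | p.1 ⊆ B ∧ p.1.Countable ∧ ∀ x, x ∉ p.1 → p.2 x = 0}) ≤ 2 ^ ℵ₀ := by
  classical
  set P := {p : Set α × (α → ℕ) | p.1 ⊆ B ∧ p.1.Countable ∧ ∀ x, x ∉ p.1 → p.2 x = 0} with hPdef
  have henc : ∀ p : ↥P, ∃ f : ℕ → Option (↥B × ULift.{u} ℕ),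
      insert none (some '' graphOf B (p : Set α × (α → ℕ))) = Set.range f := by
    intro p
    have hc : (insert none (some '' graphOf B (p : Set α × (α → ℕ)))).Countable :=
      ((graphOf_countable p.2.2.1).image _).insert _
    exact hc.exists_eq_range (Set.insert_nonempty _ _)
  choose enc henc using henc
  have hinj : Function.Injective enc := by
    intro p p' h
    have : insert none (some '' graphOf B (p : Set α × (α → ℕ)))
        = insert none (some '' graphOf B (p' : Set α × (α → ℕ))) := by
      rw [henc p, henc p', h]
    have h3 : graphOf B (p : Set α × (α → ℕ)) = graphOf B (p' : Set α × (α → ℕ)) := by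
      ext q
      have hq := Set.ext_iff.1 this (some q)
      simpa using hq
    exact Subtype.ext (graphOf_inj p.2 p'.2 h3)
  exact (Cardinal.mk_le_of_injective hinj).trans (card_option_graph hB)

lemma card_step (c : α → α → ℕ) [Nonempty α] {B : Set α} (hB : #B ≤ 2 ^ ℵ₀) :
    #(step c B) ≤ 2 ^ ℵ₀ := by
  refine (Cardinal.mk_union_le _ _).trans ?_
  have h2 := (Cardinal.mk_image_le (f := fun p : Set α × (α → ℕ) => rho c p.1 p.2)
    (s := {p | p.1 ⊆ B ∧ p.1.Countable ∧ ∀ x, x ∉ p.1 → p.2 x = 0})).trans (card_pairs hB)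
  calc #B + _ ≤ 2 ^ ℵ₀ + 2 ^ ℵ₀ := by gcongr
    _ = 2 ^ ℵ₀ := Cardinal.add_eq_self aleph0_le_cont



section Recursions

variable (c : α → α → ℕ) [Nonempty α]

noncomputable def ERA : W.{u} → Set α :=
  (IsWellFounded.wf (r := ((· < ·) : W.{u} → W.{u} → Prop))).fix
    (fun w ih => step c (⋃ v : {v : W.{u} // v < w}, ih v.1 v.2))

lemma ERA_eq (w : W.{u}) :
    ERA c w = step c (⋃ v : {v : W.{u} // v < w}, ERA c v.1) :=
  (IsWellFounded.wf).fix_eq _ w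

lemma ERA_card (w : W.{u}) : #(ERA c w) ≤ 2 ^ ℵ₀ := by
  induction w using (IsWellFounded.wf (r := ((· < ·) : W.{u} → W.{u} → Prop))).induction with
  | _ w ih =>
    rw [ERA_eq]
    apply card_step
    have hcnt : Countable {v : W.{u} // v < w} := (W_Iio_countable w).to_subtype
    refine (Cardinal.mk_iUnion_le_sum_mk).trans ?_
    refine (Cardinal.sum_le_sum _ (fun _ => 2 ^ ℵ₀) (fun (v : {v : W.{u} // v < w}) => ih v.1 v.2)).trans ?_
    rw [Cardinal.sum_const']
    calc #{v : W.{u} // v < w} * 2 ^ ℵ₀ ≤ ℵ₀ * 2 ^ ℵ₀ := by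
          gcongr; exact Cardinal.mk_le_aleph0
      _ ≤ (2 ^ ℵ₀) * 2 ^ ℵ₀ := by gcongr; exact aleph0_le_cont
      _ = 2 ^ ℵ₀ := cont_mul_cont

lemma ERA_union_card : #(⋃ w : W.{u}, ERA c w) ≤ 2 ^ ℵ₀ := by
  refine (Cardinal.mk_iUnion_le_sum_mk).trans ?_
  refine (Cardinal.sum_le_sum _ (fun _ => 2 ^ ℵ₀) (fun w => ERA_card c w)).trans ?_
  rw [Cardinal.sum_const']
  calc #(W.{u}) * 2 ^ ℵ₀ ≤ (2 ^ ℵ₀) * 2 ^ ℵ₀ := by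
        gcongr
        rw [Cardinal.mk_toType, Cardinal.card_ord]
        exact (Cardinal.aleph_one_le_continuum).trans_eq (Cardinal.two_power_aleph0).symm
    _ = 2 ^ ℵ₀ := cont_mul_cont

lemma rho_mem_ERA_union {D : Set α} (hD : D ⊆ ⋃ w : W.{u}, ERA c w) (hDc : D.Countable)
    {h : α → ℕ} (hz : ∀ x, x ∉ D → h x = 0) :
    rho c D h ∈ ⋃ w : W.{u}, ERA c w := by
  have hsel : ∀ d : ↥D, ∃ w : W.{u}, (d : α) ∈ ERA c w := fun d => Set.mem_iUnion.1 (hD d.2)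
  choose g hg using hsel
  haveI : Countable ↥D := hDc.to_subtype
  obtain ⟨w, hw⟩ := W_bounded (Set.countable_range g)
  have hDsub : D ⊆ ⋃ v : {v : W.{u} // v < w}, ERA c v.1 := by
    intro d hd
    exact Set.mem_iUnion.2 ⟨⟨g ⟨d, hd⟩, hw _ (Set.mem_range_self _)⟩, hg ⟨d, hd⟩⟩
  refine Set.mem_iUnion.2 ⟨w, ?_⟩
  rw [ERA_eq]
  exact rho_mem_step hDsub hDc hz

variable (a : α)

open Classical in
noncomputable def ERf : W.{u} → α :=
  (IsWellFounded.wf (r := ((· < ·) : W.{u} → W.{u} → Prop))).fix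
    (fun w ih => rho c {x | ∃ v : {v : W.{u} // v < w}, ih v.1 v.2 = x}
      (fun x => if x ∈ {x | ∃ v : {v : W.{u} // v < w}, ih v.1 v.2 = x} then c x a else 0))

open Classical in
lemma ERf_eq (w : W.{u}) :
    ERf c a w = rho c {x | ∃ v : {v : W.{u} // v < w}, ERf c a v.1 = x}
      (fun x => if x ∈ {x | ∃ v : {v : W.{u} // v < w}, ERf c a v.1 = x} then c x a else 0) :=
  (IsWellFounded.wf).fix_eq _ w

lemma ERf_spec (ha : a ∉ ⋃ w : W.{u}, ERA c w) (w : W.{u}) :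
    ERf c a w ∈ (⋃ w : W.{u}, ERA c w) ∧ (∀ v, v < w → ERf c a v ≠ ERf c a w) ∧
      ∀ v, v < w → c (ERf c a v) (ERf c a w) = c (ERf c a v) a := by
  induction w using (IsWellFounded.wf (r := ((· < ·) : W.{u} → W.{u} → Prop))).induction with
  | _ w ih =>
    classical
    set D : Set α := {x | ∃ v : {v : W.{u} // v < w}, ERf c a v.1 = x} with hDdef
    set h : α → ℕ := fun x => if x ∈ D then c x a else 0 with hhdef
    have hDsub : D ⊆ ⋃ w : W.{u}, ERA c w := by
      rintro x ⟨v, rfl⟩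
      exact (ih v.1 v.2).1
    have hDc : D.Countable := by
      have : D = Set.range (fun v : {v : W.{u} // v < w} => ERf c a v.1) := rfl
      rw [this]
      haveI : Countable {v : W.{u} // v < w} := (W_Iio_countable w).to_subtype
      exact Set.countable_range _
    have hz : ∀ x, x ∉ D → h x = 0 := fun x hx => if_neg hx
    have hE : ∃ x, x ∉ D ∧ ∀ d ∈ D, c d x = h d := by
      refine ⟨a, fun haD => ha (hDsub haD), fun d hd => ?_⟩
      rw [hhdef]
      simp only [if_pos hd]
    obtain ⟨hnD, hvals⟩ := rho_spec hE
    have hmem := rho_mem_ERA_union c hDsub hDc hz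
    have hfw : ERf c a w = rho c D h := ERf_eq c a w
    refine ⟨hfw ▸ hmem, ?_, ?_⟩
    · intro v hv heq
      exact hnD (by rw [← hfw, ← heq]; exact ⟨⟨v, hv⟩, rfl⟩)
    · intro v hv
      have hvD : ERf c a v ∈ D := ⟨⟨v, hv⟩, rfl⟩
      rw [hfw, hvals _ hvD, hhdef]
      simp only [if_pos hvD]

end Recursions

lemma erdosRado {α : Type u} (hα : 2 ^ ℵ₀ < #α) (c : α → α → ℕ) :
    ∃ A : Set α, ¬A.Countable ∧ ∃ n : ℕ, ∀ x ∈ A, ∀ y ∈ A, x ≠ y → c x y = n ∨ c y x = n := by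
  haveI : Nonempty α := by
    rw [← Cardinal.mk_ne_zero_iff]
    intro h
    rw [h] at hα
    exact absurd (hα.trans_le zero_le) (lt_irrefl _)
  have hex : ∃ a : α, a ∉ ⋃ w : W.{u}, ERA c w := by
    by_contra h
    push_neg at h
    have huniv : (⋃ w : W.{u}, ERA c w) = Set.univ := Set.eq_univ_iff_forall.2 h
    have := ERA_union_card c
    rw [huniv, Cardinal.mk_univ] at this
    exact absurd (hα.trans_le this) (lt_irrefl _)
  obtain ⟨a, ha⟩ := hex
  have hspec := ERf_spec c a ha
  have hinj : Function.Injective (ERf c a) := by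
    intro v w h
    rcases lt_trichotomy v w with hlt | heq | hlt
    · exact absurd h ((hspec w).2.1 v hlt)
    · exact heq
    · exact absurd h.symm ((hspec v).2.1 w hlt)
  obtain ⟨n, hn⟩ := W_fiber (fun w => c (ERf c a w) a)
  refine ⟨ERf c a '' ((fun w => c (ERf c a w) a) ⁻¹' {n}), ?_, n, ?_⟩
  · intro hcnt
    exact hn (((hcnt.preimage hinj)).mono (Set.subset_preimage_image _ _))
  · rintro x ⟨v, hv, rfl⟩ y ⟨w, hw, rfl⟩ hxy
    have hvw : v ≠ w := fun h => hxy (by rw [h])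
    rcases hvw.lt_or_gt with h | h
    · left; rw [(hspec w).2.2 v h]; exact hv
    · right; rw [(hspec v).2.2 w h]; exact hw

section Topo

variable {X : Type u} [TopologicalSpace X]

lemma cdc_subspace_card [T2Space X] [NormalSpace X]
    (𝒰 : ℕ → Set (Set X)) (hcov : ∀ n, IsOpenCover X (𝒰 n))
    (hrank : ∀ x : X, (⋂ n, st X (st X {x} (𝒰 n)) (𝒰 n)) = {x})
    (Y : Set X) (hcdc : CDC ↥Y) : #↥Y ≤ 2 ^ ℵ₀ := by
  classical
  by_contra hY
  push_neg at hY
  -- basic facts about stars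
  have hmemU : ∀ (x : X) (n : ℕ), ∃ U ∈ 𝒰 n, x ∈ U := by
    intro x n
    have hx : x ∈ ⋃₀ 𝒰 n := by rw [(hcov n).2]; exact Set.mem_univ x
    exact hx
  have hxS : ∀ (x : X) (n : ℕ), x ∈ st X {x} (𝒰 n) := by
    intro x n
    obtain ⟨U, hU, hxU⟩ := hmemU x n
    exact ⟨U, ⟨hU, ⟨x, rfl, hxU⟩⟩, hxU⟩
  have hSopen : ∀ (x : X) (n : ℕ), IsOpen (st X {x} (𝒰 n)) := fun x n =>
    isOpen_sUnion (fun U hU => (hcov n).1 U hU.1)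
  have hWsub : ∀ (x : X) (n : ℕ) (W : Set X), W ∈ 𝒰 n → x ∈ W → W ⊆ st X {x} (𝒰 n) :=
    fun x n W hW hxW y hy => ⟨W, ⟨hW, ⟨x, rfl, hxW⟩⟩, hy⟩
  have hkey : ∀ (x y : X) (n : ℕ), (st X {x} (𝒰 n) ∩ st X {y} (𝒰 n)).Nonempty →
      y ∈ st X (st X {x} (𝒰 n)) (𝒰 n) := by
    rintro x y n ⟨z, hzx, hzy⟩
    obtain ⟨V, ⟨hV, ⟨y', hy', hyV⟩⟩, hzV⟩ := hzy
    rw [Set.mem_singleton_iff] at hy'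
    subst hy'
    exact ⟨V, ⟨hV, ⟨z, hzx, hzV⟩⟩, hyV⟩
  have hex : ∀ a b : ↥Y, a ≠ b → ∃ n, st X {(a : X)} (𝒰 n) ∩ st X {(b : X)} (𝒰 n) = ∅ := by
    intro a b hab
    by_contra h
    push_neg at h
    have hb : (b : X) ∈ ⋂ n, st X (st X {(a : X)} (𝒰 n)) (𝒰 n) :=
      Set.mem_iInter.2 fun n => hkey _ _ n (h n)
    rw [hrank (a : X)] at hb
    exact hab (Subtype.ext hb).symm
  -- the coloring
  set c : ↥Y → ↥Y → ℕ := fun a b =>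
    if h : ∃ n, st X {(a : X)} (𝒰 n) ∩ st X {(b : X)} (𝒰 n) = ∅ then h.choose else 0 with hcdef
  have hc : ∀ a b : ↥Y, a ≠ b →
      st X {(a : X)} (𝒰 (c a b)) ∩ st X {(b : X)} (𝒰 (c a b)) = ∅ := by
    intro a b hab
    have hcab : c a b = (hex a b hab).choose := by rw [hcdef]; exact dif_pos (hex a b hab)
    rw [hcab]
    exact (hex a b hab).choose_spec
  obtain ⟨A, hAunc, n, hA⟩ := erdosRado hY c
  -- pairwise disjoint stars at level n
  have hdisjA : ∀ a ∈ A, ∀ b ∈ A, a ≠ b →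
      st X {(a : X)} (𝒰 n) ∩ st X {(b : X)} (𝒰 n) = ∅ := by
    intro a ha b hb hab
    rcases hA a ha b hb hab with h | h
    · rw [← h]; exact hc a b hab
    · rw [Set.inter_comm]
      have := hc b a (Ne.symm hab)
      rwa [h] at this
  set A' : Set X := Subtype.val '' A with hA'def
  have hdisj' : ∀ a ∈ A', ∀ b ∈ A', a ≠ b →
      st X {a} (𝒰 n) ∩ st X {b} (𝒰 n) = ∅ := by
    rintro a ⟨a0, ha0, rfl⟩ b ⟨b0, hb0, rfl⟩ hab
    exact hdisjA a0 ha0 b0 hb0 (fun h => hab (by rw [h]))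
  -- A' is closed
  have hA'closed : IsClosed A' := by
    rw [← isOpen_compl_iff, isOpen_iff_forall_mem_open]
    intro z hz
    obtain ⟨Wz, hWz, hzW⟩ := hmemU z n
    by_cases hWA : ∃ a, a ∈ A' ∧ a ∈ Wz
    · obtain ⟨a, haA, haW⟩ := hWA
      refine ⟨Wz \ {a}, ?_, ((hcov n).1 Wz hWz).sdiff isClosed_singleton, ?_⟩
      · rintro y ⟨hyW, hya⟩ hyA
        have hya' : y ≠ a := by simpa using hya
        have hdd := hdisj' a haA y hyA hya'.symm
        have hzin : z ∈ st X {a} (𝒰 n) ∩ st X {y} (𝒰 n) :=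
          ⟨hWsub a n Wz hWz haW hzW, hWsub y n Wz hWz hyW hzW⟩
        rw [hdd] at hzin
        exact hzin
      · exact ⟨hzW, by simpa using (fun h : z = a => hz (h ▸ haA))⟩
    · push_neg at hWA
      exact ⟨Wz, fun y hyW hyA => hWA y hyA hyW, (hcov n).1 Wz hWz, hzW⟩
  -- normality
  set U : Set X := ⋃ a : ↥A', st X {(a : X)} (𝒰 n) with hUdef
  have hUopen : IsOpen U := isOpen_iUnion fun a => hSopen _ _
  have hA'U : A' ⊆ U := fun a ha => Set.mem_iUnion.2 ⟨⟨a, ha⟩, hxS a n⟩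
  obtain ⟨G, H, hG, hH, hA'G, hUcH, hGH⟩ :=
    NormalSpace.normal A' Uᶜ hA'closed hUopen.isClosed_compl
      (Set.disjoint_left.2 fun x hx hxc => hxc (hA'U hx))
  have hclG : closure G ⊆ U := by
    have h1 : closure G ⊆ Hᶜ :=
      closure_minimal (fun x hx hxH => Set.disjoint_left.1 hGH hx hxH)
        (isClosed_compl_iff.2 hH)
    intro x hx
    by_contra hxU
    exact h1 hx (hUcH hxU)
  -- the discrete family in X
  have hdiscX : ∀ z : X, ∃ O : Set X, IsOpen O ∧ z ∈ O ∧
      ∀ a ∈ A', (O ∩ (st X {a} (𝒰 n) ∩ G)).Nonempty →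
        ∀ b ∈ A', (O ∩ (st X {b} (𝒰 n) ∩ G)).Nonempty → a = b := by
    intro z
    by_cases hz : z ∈ closure G
    · obtain ⟨b0, hb0⟩ := Set.mem_iUnion.1 (hclG hz)
      refine ⟨st X {(b0 : X)} (𝒰 n), hSopen _ _, hb0, ?_⟩
      rintro a ha ⟨x, hxO, hxa, -⟩ b hb ⟨y, hyO, hyb, -⟩
      have hab0 : a = (b0 : X) := by
        by_contra hne
        have := hdisj' a ha (b0 : X) b0.2 hne
        have : x ∈ st X {a} (𝒰 n) ∩ st X {(b0 : X)} (𝒰 n) := ⟨hxa, hxO⟩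
        rw [hdisj' a ha (b0 : X) b0.2 hne] at this
        exact this
      have hbb0 : b = (b0 : X) := by
        by_contra hne
        have : y ∈ st X {b} (𝒰 n) ∩ st X {(b0 : X)} (𝒰 n) := ⟨hyb, hyO⟩
        rw [hdisj' b hb (b0 : X) b0.2 hne] at this
        exact this
      rw [hab0, hbb0]
    · refine ⟨(closure G)ᶜ, isClosed_closure.isOpen_compl, hz, ?_⟩
      rintro a ha ⟨x, hxO, -, hxG⟩ b hb hy
      exact absurd (subset_closure hxG) hxO
  -- move to the subspace Y
  set F : Set X → Set ↥Y := fun s => Subtype.val ⁻¹' s with hFdef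
  set 𝒢 : Set (Set ↥Y) := (fun a : ↥Y => F (st X {(a : X)} (𝒰 n) ∩ G)) '' A with h𝒢def
  have hmemG : ∀ a : ↥Y, a ∈ A → a ∈ F (st X {(a : X)} (𝒰 n) ∩ G) := by
    intro a ha
    exact ⟨hxS _ n, hA'G ⟨a, ha, rfl⟩⟩
  have h𝒢open : ∀ s ∈ 𝒢, IsOpen s ∧ s.Nonempty := by
    rintro s ⟨a, ha, rfl⟩
    exact ⟨((hSopen _ n).inter hG).preimage continuous_subtype_val, ⟨a, hmemG a ha⟩⟩
  have h𝒢disc : IsDiscreteFamily ↥Y 𝒢 := by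
    intro y
    obtain ⟨O, hOopen, hyO, hOkey⟩ := hdiscX (y : X)
    refine ⟨F O, hOopen.preimage continuous_subtype_val, hyO, ?_⟩
    rintro s ⟨⟨a, ha, rfl⟩, ⟨u, huO, hua⟩⟩ t ⟨⟨b, hb, rfl⟩, ⟨v, hvO, hvb⟩⟩
    have hab : (a : X) = (b : X) :=
      hOkey (a : X) ⟨a, ha, rfl⟩ ⟨(u : X), huO, hua⟩ (b : X) ⟨b, hb, rfl⟩ ⟨(v : X), hvO, hvb⟩
    rw [Subtype.ext hab]
  have h𝒢count : 𝒢.Countable := hcdc 𝒢 h𝒢open h𝒢disc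
  -- contradiction: A is uncountable but injects into 𝒢
  apply hAunc
  have hinj : Set.InjOn (fun a : ↥Y => F (st X {(a : X)} (𝒰 n) ∩ G)) A := by
    intro a ha b hb h
    by_contra hab
    have h' : F (st X {(a : X)} (𝒰 n) ∩ G) = F (st X {(b : X)} (𝒰 n) ∩ G) := h
    have h1 : a ∈ F (st X {(b : X)} (𝒰 n) ∩ G) := h' ▸ hmemG a ha
    have h2 : (a : X) ∈ st X {(a : X)} (𝒰 n) ∩ st X {(b : X)} (𝒰 n) :=
      ⟨hxS _ n, h1.1⟩
    rw [hdisjA a ha b hb hab] at h2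
    exact h2
  exact Set.countable_of_injective_of_countable_image hinj
    (h𝒢count.mono (fun s hs => hs))

end Topo

end Stmt9Aux

theorem stmt9 (X : Type u) [TopologicalSpace X] [T2Space X] [NormalSpace X]
    (hs : StarCDC X) (hd : HasRank2Diagonal X) :
    #X ≤ 2 ^ ℵ₀ := by
  classical
  obtain ⟨𝒰, hcov, hrank⟩ := hd
  choose Y hcdc hstar using fun n => hs (𝒰 n) (hcov n)
  have hYcard : ∀ n, #↥(Y n) ≤ 2 ^ ℵ₀ := fun n =>
    Stmt9Aux.cdc_subspace_card 𝒰 hcov hrank (Y n) (hcdc n)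
  -- encode each point by a sequence of points of the Y n
  have hsel : ∀ (x : X) (n : ℕ), ∃ y : ↥(Y n), ∃ U ∈ 𝒰 n, x ∈ U ∧ (y : X) ∈ U := by
    intro x n
    have hx : x ∈ st X (Y n) (𝒰 n) := by rw [hstar n]; exact Set.mem_univ x
    obtain ⟨U, ⟨hU, ⟨y, hyY, hyU⟩⟩, hxU⟩ := hx
    exact ⟨⟨y, hyY⟩, U, hU, hxU, hyU⟩
  choose φ Ux hU hxU hyU using hsel
  have hφinj : Function.Injective φ := by
    intro x x' h
    have hx' : x' ∈ ⋂ n, st X (st X {x} (𝒰 n)) (𝒰 n) := by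
      refine Set.mem_iInter.2 fun n => ?_
      refine ⟨Ux x' n, ⟨hU x' n, ⟨(φ x n : X), ?_, ?_⟩⟩, hxU x' n⟩
      · exact ⟨Ux x n, ⟨hU x n, ⟨x, rfl, hxU x n⟩⟩, hyU x n⟩
      · have : φ x n = φ x' n := congrFun h n
        rw [this]
        exact hyU x' n
    rw [hrank x] at hx'
    exact hx'.symm
  refine (Cardinal.mk_le_of_injective hφinj).trans ?_
  -- the target has cardinality at most continuum
  have hemb : ∀ n, Nonempty (↥(Y n) ↪ (ℕ → ULift.{u} Bool)) := by
    intro n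
    rw [← Cardinal.le_def]
    refine (hYcard n).trans_eq ?_
    have e : (ℕ → ULift.{u} Bool) ≃ (ULift.{u} ℕ → ULift.{u} Bool) :=
      Equiv.arrowCongr Equiv.ulift.symm (Equiv.refl _)
    rw [Cardinal.mk_congr e, ← Cardinal.power_def]
    simp
  let e := fun n => (hemb n).some
  have hΦ : Function.Injective (fun (f : ∀ n, ↥(Y n)) (n : ℕ) => e n (f n)) := by
    intro f g h
    funext n
    exact (e n).injective (congrFun h n)
  refine (Cardinal.mk_le_of_injective hΦ).trans ?_
  have e2 : (ℕ → ℕ → ULift.{u} Bool) ≃ (ULift.{u} ℕ → ULift.{u} Bool) :=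
    ((Equiv.curry ℕ ℕ (ULift.{u} Bool)).symm.trans
      (Equiv.arrowCongr (Denumerable.eqv (ℕ × ℕ)) (Equiv.refl _))).trans
      (Equiv.arrowCongr Equiv.ulift.symm (Equiv.refl _))
  rw [Cardinal.mk_congr e2, ← Cardinal.power_def]
  simp
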